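/- Let f : [0,1] → ℝ be continuously differentiable and monotonically nondecreasing, with ∫₀¹ (t − 2/3)·f(t) dt = 0. Define I(x) = f(1) − 4·f(0) − ∫₀^x (1−3t)²·(f'(1−t) + 8·f'(2t)) dt for x ∈ [0, 1/3]. Then I(x) ≥ 0 for all x ∈ [0, 1/3], and I(1/3) = 0. -/

import Mathlib

open Set intervalIntegral

theorem I_nonneg_and_vanishes (f f' : ℝ → ℝ)
    (hderiv : ∀ x ∈ Set.Icc (0 : ℝ) 1, HasDerivWithinAt f (f' x) (Set.Icc (0 : ℝ) 1) x)
    (hf'cont : ContinuousOn f' (Set.Icc (0 : ℝ) 1))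
    (hmono : MonotoneOn f (Set.Icc (0 : ℝ) 1))
    (hint : (∫ t in (0 : ℝ)..1, (t - 2/3) * f t) = 0) :
    (∀ x ∈ Set.Icc (0 : ℝ) (1/3),
      0 ≤ f 1 - 4 * f 0 - ∫ t in (0 : ℝ)..x, (1 - 3*t)^2 * (f' (1 - t) + 8 * f' (2*t))) ∧
    f 1 - 4 * f 0 - (∫ t in (0 : ℝ)..(1/3 : ℝ), (1 - 3*t)^2 * (f' (1 - t) + 8 * f' (2*t))) = 0 := by
  -- f' is nonnegative on [0,1]
  have hf'nonneg : ∀ x ∈ Set.Icc (0:ℝ) 1, 0 ≤ f' x := by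
    intro x hx
    have hslope : Filter.Tendsto (slope f x) (nhdsWithin x (Icc (0:ℝ) 1 \ {x})) (nhds (f' x)) :=
      hasDerivWithinAt_iff_tendsto_slope.mp (hderiv x hx)
    have hne : (nhdsWithin x (Icc (0:ℝ) 1 \ {x})).NeBot := by
      rcases lt_or_eq_of_le hx.2 with h1 | h1
      · have : Ioo x 1 ⊆ Icc (0:ℝ) 1 \ {x} := fun y hy =>
          ⟨⟨le_trans hx.1 hy.1.le, hy.2.le⟩, ne_of_gt hy.1⟩
        exact (left_nhdsWithin_Ioo_neBot h1).mono (nhdsWithin_mono x this)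
      · have h0 : (0:ℝ) < x := by rw [h1]; norm_num
        have : Ioo (0:ℝ) x ⊆ Icc (0:ℝ) 1 \ {x} := fun y hy =>
          ⟨⟨hy.1.le, le_trans hy.2.le hx.2⟩, ne_of_lt hy.2⟩
        exact (right_nhdsWithin_Ioo_neBot h0).mono (nhdsWithin_mono x this)
    refine ge_of_tendsto hslope ?_
    filter_upwards [self_mem_nhdsWithin] with y hy
    rcases hy with ⟨hy1, hy2⟩
    rw [slope_def_field]
    rcases lt_or_gt_of_ne (Ne.symm (by simpa using hy2) : x ≠ y) with h | h
    · exact div_nonneg (sub_nonneg.2 (hmono hx hy1 h.le)) (sub_nonneg.2 h.le)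
    · rw [div_nonneg_iff]
      exact Or.inr ⟨sub_nonpos.2 (hmono hy1 hx h.le), sub_nonpos.2 h.le⟩
  have hfc : ContinuousOn f (Icc (0:ℝ) 1) := fun x hx => (hderiv x hx).continuousWithinAt
  -- continuity of the integrand g on [0,1/3]
  set g : ℝ → ℝ := fun t => (1 - 3*t)^2 * (f' (1 - t) + 8 * f' (2*t)) with hg
  have maps1 : MapsTo (fun t : ℝ => 1 - t) (Icc (0:ℝ) (1/3)) (Icc (0:ℝ) 1) := by
    intro t ht
    simp only [Set.mem_Icc] at ht ⊢
    constructor <;> linarith [ht.1, ht.2]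
  have maps2 : MapsTo (fun t : ℝ => 2*t) (Icc (0:ℝ) (1/3)) (Icc (0:ℝ) 1) := by
    intro t ht
    simp only [Set.mem_Icc] at ht ⊢
    constructor <;> linarith [ht.1, ht.2]
  have hgcont : ContinuousOn g (Icc (0:ℝ) (1/3)) := by
    apply ContinuousOn.mul
    · exact ((continuous_const.sub (continuous_const.mul continuous_id)).pow 2).continuousOn
    · exact (hf'cont.comp (continuous_const.sub continuous_id).continuousOn maps1).add
        (continuousOn_const.mul
          (hf'cont.comp (continuous_const.mul continuous_id).continuousOn maps2))
  -- g is nonnegative on [0,1/3]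
  have hgnonneg : ∀ t ∈ Icc (0:ℝ) (1/3), 0 ≤ g t := by
    intro t ht
    exact mul_nonneg (sq_nonneg _) (add_nonneg (hf'nonneg _ (maps1 ht))
      (mul_nonneg (by norm_num) (hf'nonneg _ (maps2 ht))))
  -- the key identity: ∫₀^{1/3} g = f 1 - 4 f 0
  have hh : ContinuousOn (fun u : ℝ => (3*u - 2)^2 * f' u) (Icc (0:ℝ) 1) :=
    ((continuous_const.mul continuous_id).sub continuous_const |>.pow 2).continuousOn.mul hf'cont
  have hA : (∫ t in (0:ℝ)..(1/3), (1 - 3*t)^2 * f' (1 - t))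
      = ∫ u in (2/3:ℝ)..1, (3*u - 2)^2 * f' u := by
    have := integral_comp_sub_left (a := (0:ℝ)) (b := 1/3)
      (fun u : ℝ => (3*u - 2)^2 * f' u) 1
    norm_num at this
    rw [← this]
    apply integral_congr
    intro t _
    ring_nf
  have hB : (∫ t in (0:ℝ)..(1/3), (1 - 3*t)^2 * (8 * f' (2*t)))
      = ∫ u in (0:ℝ)..(2/3:ℝ), (3*u - 2)^2 * f' u := by
    have h2 : (2:ℝ) ≠ 0 := by norm_num
    have := integral_comp_mul_left (a := (0:ℝ)) (b := 1/3)
      (fun u : ℝ => (1 - (3/2)*u)^2 * (8 * f' u)) h2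
    norm_num at this ⊢
    rw [show (∫ t in (0:ℝ)..(1/3), (1 - 3*t)^2 * (8 * f' (2*t)))
        = ∫ t in (0:ℝ)..(1/3), (fun u : ℝ => (1 - (3/2)*u)^2 * (8 * f' u)) (2*t) by
      apply integral_congr; intro t _; ring_nf, this, ← integral_const_mul]
    apply integral_congr
    intro t _
    ring_nf
  -- integrability facts
  have hint1 : IntervalIntegrable (fun u : ℝ => (3*u - 2)^2 * f' u) MeasureTheory.volume 0 (2/3) :=
    (hh.mono (Icc_subset_Icc le_rfl (by norm_num))).intervalIntegrable_of_Icc (by norm_num)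
  have hint2 : IntervalIntegrable (fun u : ℝ => (3*u - 2)^2 * f' u) MeasureTheory.volume (2/3) 1 :=
    (hh.mono (Icc_subset_Icc (by norm_num) le_rfl)).intervalIntegrable_of_Icc (by norm_num)
  have hadj : (∫ u in (0:ℝ)..(2/3), (3*u - 2)^2 * f' u)
      + (∫ u in (2/3:ℝ)..1, (3*u - 2)^2 * f' u) = ∫ u in (0:ℝ)..1, (3*u - 2)^2 * f' u :=
    integral_add_adjacent_intervals hint1 hint2
  -- integration by parts via FTC
  have hG : (∫ u in (0:ℝ)..1, (6*(3*u - 2) * f u + (3*u - 2)^2 * f' u))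
      = f 1 - 4 * f 0 := by
    have key := integral_eq_sub_of_hasDeriv_right_of_le (a := 0) (b := 1)
      (f := fun t : ℝ => (3*t - 2)^2 * f t)
      (f' := fun t : ℝ => 6*(3*t - 2) * f t + (3*t - 2)^2 * f' t)
      (by norm_num)
      (((continuous_const.mul continuous_id).sub continuous_const |>.pow 2).continuousOn.mul hfc)
      ?_ ?_
    · rw [key]; norm_num
    · intro x hx
      have hxmem : x ∈ Icc (0:ℝ) 1 := ⟨hx.1.le, hx.2.le⟩
      have hfd : HasDerivAt f (f' x) x :=
        (hderiv x hxmem).hasDerivAt (Icc_mem_nhds hx.1 hx.2)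
      have hpd : HasDerivAt (fun t : ℝ => (3*t - 2)^2) (6*(3*x - 2)) x := by
        have := (((hasDerivAt_id x).const_mul (3:ℝ)).sub_const 2).fun_pow 2
        simp only [id_eq] at this
        refine this.congr_deriv ?_
        push_cast
        ring
      exact ((hpd.mul hfd).congr_deriv (by ring)).hasDerivWithinAt
    · apply ContinuousOn.intervalIntegrable_of_Icc (by norm_num)
      exact ((continuousOn_const.mul
        (((continuous_const.mul continuous_id).sub continuous_const).continuousOn)).mul hfc).add hh
  -- split ∫ G' and eliminate the f-term using hint
  have int1 : IntervalIntegrable (fun t : ℝ => 6*(3*t - 2) * f t) MeasureTheory.volume 0 1 :=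
    ((continuousOn_const.mul
      (((continuous_const.mul continuous_id).sub continuous_const).continuousOn)).mul
      hfc).intervalIntegrable_of_Icc (by norm_num)
  have int2 : IntervalIntegrable (fun u : ℝ => (3*u - 2)^2 * f' u) MeasureTheory.volume 0 1 :=
    hh.intervalIntegrable_of_Icc (by norm_num)
  have hzero : (∫ t in (0:ℝ)..1, 6*(3*t - 2) * f t) = 0 := by
    have e : (∫ t in (0:ℝ)..1, 6*(3*t - 2) * f t)
        = ∫ t in (0:ℝ)..1, 18 * ((t - 2/3) * f t) := by
      apply integral_congr; intro t _; ring
    rw [e, integral_const_mul, hint, mul_zero]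
  have hsplit : (∫ u in (0:ℝ)..1, (6*(3*u - 2) * f u + (3*u - 2)^2 * f' u))
      = (∫ t in (0:ℝ)..1, 6*(3*t - 2) * f t) + ∫ u in (0:ℝ)..1, (3*u - 2)^2 * f' u :=
    integral_add int1 int2
  have hkey : (∫ u in (0:ℝ)..1, (3*u - 2)^2 * f' u) = f 1 - 4 * f 0 := by
    rw [hsplit, hzero, zero_add] at hG
    exact hG
  -- integrability of the two pieces of g on [0,1/3]
  have ia : IntervalIntegrable (fun t : ℝ => (1 - 3*t)^2 * f' (1 - t))
      MeasureTheory.volume 0 (1/3) := by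
    apply ContinuousOn.intervalIntegrable_of_Icc (by norm_num)
    exact ((continuous_const.sub (continuous_const.mul continuous_id)).pow 2).continuousOn.mul
      (hf'cont.comp (continuous_const.sub continuous_id).continuousOn maps1)
  have ib : IntervalIntegrable (fun t : ℝ => (1 - 3*t)^2 * (8 * f' (2*t)))
      MeasureTheory.volume 0 (1/3) := by
    apply ContinuousOn.intervalIntegrable_of_Icc (by norm_num)
    exact ((continuous_const.sub (continuous_const.mul continuous_id)).pow 2).continuousOn.mul
      (continuousOn_const.mul
        (hf'cont.comp (continuous_const.mul continuous_id).continuousOn maps2))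
  have hgsum : (∫ t in (0:ℝ)..(1/3), g t) = f 1 - 4 * f 0 := by
    have e1 : (∫ t in (0:ℝ)..(1/3), g t)
        = (∫ t in (0:ℝ)..(1/3), (1 - 3*t)^2 * f' (1 - t))
          + ∫ t in (0:ℝ)..(1/3), (1 - 3*t)^2 * (8 * f' (2*t)) := by
      rw [← integral_add ia ib]
      apply integral_congr
      intro t _
      simp only [hg]
      ring
    rw [e1, hA, hB, add_comm, hadj, hkey]
  constructor
  · intro x hx
    have isub1 : IntervalIntegrable g MeasureTheory.volume 0 x :=
      (hgcont.mono (Icc_subset_Icc le_rfl hx.2)).intervalIntegrable_of_Icc hx.1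
    have isub2 : IntervalIntegrable g MeasureTheory.volume x (1/3) :=
      (hgcont.mono (Icc_subset_Icc hx.1 le_rfl)).intervalIntegrable_of_Icc hx.2
    have hadd := integral_add_adjacent_intervals isub1 isub2
    have hpos : 0 ≤ ∫ t in x..(1/3:ℝ), g t :=
      integral_nonneg hx.2 (fun u hu => hgnonneg u ⟨le_trans hx.1 hu.1, hu.2⟩)
    have : (∫ t in (0:ℝ)..x, g t) ≤ f 1 - 4 * f 0 := by linarith [hgsum, hadd, hpos]
    simpa [hg] using sub_nonneg.2 this
  · rw [show (∫ t in (0:ℝ)..(1/3:ℝ), (1 - 3*t)^2 * (f' (1 - t) + 8 * f' (2*t)))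
      = ∫ t in (0:ℝ)..(1/3), g t from rfl, hgsum]
    ring
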